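/- Let d ∈ ℕ and let B : Fin d × Fin d × Fin d → ℝ satisfy B_{ijk} = −B_{kji} for all i, j, k. Then for every initial condition y₀ ∈ ℝ^d there exists a unique differentiable y : ℝ → ℝ^d, defined for all time, with y(0) = y₀ and y_i'(t) = Σ_{j,k} B_{ijk} y_j(t) y_k(t) for all t and all i. -/

import Mathlib

open Finset

private lemma sum_swap₃ {d : ℕ} (G : Fin d → Fin d → Fin d → ℝ) :
    ∑ i, ∑ j, ∑ k, G i j k = ∑ i, ∑ j, ∑ k, G k j i :=
  calc ∑ i, ∑ j, ∑ k, G i j k = ∑ j, ∑ i, ∑ k, G i j k := Finset.sum_comm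
    _ = ∑ j, ∑ k, ∑ i, G i j k := Finset.sum_congr rfl fun _ _ => Finset.sum_comm
    _ = ∑ k, ∑ j, ∑ i, G i j k := Finset.sum_comm

/-- For `B_{ijk} = −B_{kji}`, the quadratic ODE
`y_i' = Σ_{j,k} B_{ijk} y_j y_k` has, for every initial condition `y₀ ∈ ℝ^d`,
a unique globally defined differentiable solution with `y(0) = y₀`. -/
theorem antisymmetric_quadratic_ODE_global_wellposedness
    (d : ℕ) (B : Fin d → Fin d → Fin d → ℝ)
    (hB : ∀ i j k, B i j k = -B k j i)
    (y₀ : Fin d → ℝ) :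
    ∃! y : ℝ → Fin d → ℝ,
      y 0 = y₀ ∧
      ∀ (t : ℝ) (i : Fin d),
        HasDerivAt (fun s => y s i) (∑ j, ∑ k, B i j k * y t j * y t k) t := by
  classical
  set f : (Fin d → ℝ) → (Fin d → ℝ) := fun y i => ∑ j, ∑ k, B i j k * y j * y k with hf_def
  set Q : (Fin d → ℝ) → ℝ := fun y => ∑ i, (y i) ^ 2 with hQ_def
  have hQ0 : ∀ y : Fin d → ℝ, 0 ≤ Q y := fun y =>
    Finset.sum_nonneg fun i _ => sq_nonneg _
  set b : ℝ := Q y₀ + 2 with hb_def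
  set χ : ℝ → ℝ := fun t => Real.smoothTransition (b - t) with hχ_def
  set g : (Fin d → ℝ) → (Fin d → ℝ) := fun y i => χ (Q y) * f y i with hg_def
  -- key algebraic identity
  have key : ∀ y : Fin d → ℝ, ∑ i, y i * f y i = 0 := by
    intro y
    have h1 : ∑ i, y i * f y i = ∑ i, ∑ j, ∑ k, B i j k * y i * y j * y k := by
      refine Finset.sum_congr rfl fun i _ => ?_
      rw [hf_def, Finset.mul_sum]
      refine Finset.sum_congr rfl fun j _ => ?_
      rw [Finset.mul_sum]
      exact Finset.sum_congr rfl fun k _ => by ring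
    have h2 : ∑ i, ∑ j, ∑ k, B i j k * y i * y j * y k
        = -∑ i, ∑ j, ∑ k, B k j i * y k * y j * y i := by
      rw [← Finset.sum_neg_distrib]
      refine Finset.sum_congr rfl fun i _ => ?_
      rw [← Finset.sum_neg_distrib]
      refine Finset.sum_congr rfl fun j _ => ?_
      rw [← Finset.sum_neg_distrib]
      refine Finset.sum_congr rfl fun k _ => ?_
      rw [hB i j k]; ring
    have h3 := sum_swap₃ (fun i j k => B i j k * y i * y j * y k)
    have : ∑ i, y i * f y i = -∑ i, y i * f y i :=
      calc ∑ i, y i * f y i = ∑ i, ∑ j, ∑ k, B i j k * y i * y j * y k := h1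
        _ = -∑ i, ∑ j, ∑ k, B k j i * y k * y j * y i := h2
        _ = -∑ i, ∑ j, ∑ k, B i j k * y i * y j * y k := by rw [← h3]
        _ = -∑ i, y i * f y i := by rw [← h1]
    linarith
  -- smoothness
  have hfi_cd : ∀ i, ContDiff ℝ 1 (fun y : Fin d → ℝ => f y i) := by
    intro i
    apply ContDiff.sum; intro j _
    apply ContDiff.sum; intro k _
    exact (contDiff_const.mul ((ContinuousLinearMap.proj j :
      (Fin d → ℝ) →L[ℝ] ℝ).contDiff)).mul ((ContinuousLinearMap.proj k :
      (Fin d → ℝ) →L[ℝ] ℝ).contDiff)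
  have hQ_cd : ContDiff ℝ 1 Q := by
    apply ContDiff.sum; intro i _
    exact ((ContinuousLinearMap.proj i : (Fin d → ℝ) →L[ℝ] ℝ).contDiff).pow 2
  have hχ_cd : ContDiff ℝ 1 χ :=
    Real.smoothTransition.contDiff.comp (contDiff_const.sub contDiff_id)
  have hg_cd : ContDiff ℝ 1 g := by
    apply contDiff_pi.2; intro i
    exact (hχ_cd.comp hQ_cd).mul (hfi_cd i)
  -- compact support
  have hb_pos : (0:ℝ) < b := by have := hQ0 y₀; simp only [hb_def]; linarith
  have hsupp : HasCompactSupport g := by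
    apply HasCompactSupport.intro (isCompact_closedBall (0 : Fin d → ℝ) (Real.sqrt b))
    intro x hx
    have hχ0 : χ (Q x) = 0 := by
      apply Real.smoothTransition.zero_of_nonpos
      have hQx : b ≤ Q x := by
        by_contra hcon
        push_neg at hcon
        apply hx
        simp only [Metric.mem_closedBall, dist_zero_right]
        rw [pi_norm_le_iff_of_nonneg (Real.sqrt_nonneg b)]
        intro i
        have h1 : (x i) ^ 2 ≤ Q x :=
          Finset.single_le_sum (fun i _ => sq_nonneg (x i)) (Finset.mem_univ i)
        have h2 : (x i) ^ 2 ≤ b := le_of_lt (lt_of_le_of_lt h1 hcon)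
        have : |x i| ≤ Real.sqrt b := by
          rw [← Real.sqrt_sq_eq_abs]
          exact Real.sqrt_le_sqrt h2
        simpa [Real.norm_eq_abs] using this
      linarith
    funext i
    simp [hg_def, hχ0]
  -- Lipschitz and bound
  have hg_diff : Differentiable ℝ g := hg_cd.differentiable one_ne_zero
  obtain ⟨L₀, hL₀⟩ := (hsupp.fderiv (𝕜 := ℝ)).exists_bound_of_continuous (hg_cd.continuous_fderiv one_ne_zero)
  set L : NNReal := ⟨max L₀ 0, le_max_right _ _⟩ with hL_def
  have hlip : LipschitzWith L g := by
    apply lipschitzWith_of_nnnorm_fderiv_le hg_diff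
    intro x
    have : ‖fderiv ℝ g x‖ ≤ (L : ℝ) := (hL₀ x).trans (le_max_left _ _)
    exact_mod_cast this
  obtain ⟨C₀, hC₀⟩ := hsupp.exists_bound_of_continuous hg_cd.continuous
  set C : ℝ := max C₀ 0 with hC_def
  have hC_nonneg : 0 ≤ C := le_max_right _ _
  have hgC : ∀ x, ‖g x‖ ≤ C := fun x => (hC₀ x).trans (le_max_left _ _)
  -- Picard–Lindelöf on each interval
  have hPL : ∀ n : ℕ, IsPicardLindelof (fun _ : ℝ => g) (tmin := -((n:ℝ)+1)) (tmax := (n:ℝ)+1)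
      ⟨0, by constructor <;> [linarith [Nat.cast_nonneg (α := ℝ) n]; positivity]⟩ y₀
      (C.toNNReal * ((n:NNReal)+1)) 0 C.toNNReal L := by
    intro n
    refine ⟨?_, ?_, ?_, ?_⟩
    · exact fun t _ => hlip.lipschitzOnWith
    · exact fun x _ => continuousOn_const
    · exact fun t _ x _ => (hgC x).trans (Real.le_coe_toNNReal C)
    · have : max ((n:ℝ)+1-0) (0-(-((n:ℝ)+1))) = (n:ℝ)+1 := by
        rw [sub_zero, zero_sub, neg_neg, max_self]
      simp only [this, NNReal.coe_mul, NNReal.coe_add, NNReal.coe_natCast, NNReal.coe_one,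
        NNReal.coe_zero, sub_zero, zero_sub, neg_neg, max_self, le_refl]
  have hsol : ∀ n : ℕ, ∃ α : ℝ → Fin d → ℝ, α 0 = y₀ ∧
      ∀ t ∈ Set.Ioo (-((n:ℝ)+1)) ((n:ℝ)+1), HasDerivAt α (g (α t)) t := by
    intro n
    obtain ⟨α, h0, h⟩ := (hPL n).exists_eq_forall_mem_Icc_hasDerivWithinAt₀
    exact ⟨α, h0, fun t ht =>
      (h t (Set.Ioo_subset_Icc_self ht)).hasDerivAt (Icc_mem_nhds ht.1 ht.2)⟩
  choose α hα0 hαode using hsol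
  -- uniqueness for the g-ODE
  have huniq : ∀ (u w : ℝ → Fin d → ℝ) (a c : ℝ), (0:ℝ) ∈ Set.Ioo a c →
      (∀ t ∈ Set.Ioo a c, HasDerivAt u (g (u t)) t) →
      (∀ t ∈ Set.Ioo a c, HasDerivAt w (g (w t)) t) →
      u 0 = w 0 → Set.EqOn u w (Set.Ioo a c) := by
    intro u w a c h0 hu hw he
    exact ODE_solution_unique_of_mem_Ioo (v := fun _ => g) (s := fun _ => Set.univ)
      (fun t _ => hlip.lipschitzOnWith) h0
      (fun t ht => ⟨hu t ht, trivial⟩) (fun t ht => ⟨hw t ht, trivial⟩) he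
  -- agreement of the local solutions
  have hagree : ∀ (N m n : ℕ), N ≤ m → N ≤ n → ∀ t : ℝ, |t| < (N:ℝ) + 1 → α m t = α n t := by
    intro N m n hm hn t ht
    have hmem : t ∈ Set.Ioo (-((N:ℝ)+1)) ((N:ℝ)+1) := by
      rcases abs_lt.1 ht with ⟨h1, h2⟩
      exact ⟨by linarith, h2⟩
    have hsub : ∀ p : ℕ, N ≤ p → Set.Ioo (-((N:ℝ)+1)) ((N:ℝ)+1) ⊆
        Set.Ioo (-((p:ℝ)+1)) ((p:ℝ)+1) := by
      intro p hp
      have : (N:ℝ) ≤ p := Nat.cast_le.2 hp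
      exact Set.Ioo_subset_Ioo (by linarith) (by linarith)
    refine huniq (α m) (α n) _ _ ?_ ?_ ?_ ?_ hmem
    · constructor
      · have : (0:ℝ) ≤ N := Nat.cast_nonneg N
        linarith
      · positivity
    · exact fun s hs => hαode m s (hsub m hm hs)
    · exact fun s hs => hαode n s (hsub n hn hs)
    · rw [hα0 m, hα0 n]
  set y : ℝ → Fin d → ℝ := fun t => α ⌊|t|⌋₊ t with hy_def
  have hyα : ∀ (N : ℕ) (t : ℝ), |t| < (N:ℝ) + 1 → y t = α N t := by
    intro N t ht
    have h1 : |t| < (⌊|t|⌋₊ : ℝ) + 1 := Nat.lt_floor_add_one |t|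
    have h2 : |t| < (min ⌊|t|⌋₊ N : ℕ) + 1 := by
      rcases min_cases ⌊|t|⌋₊ N with ⟨he, _⟩ | ⟨he, _⟩ <;> rw [he]
      · exact h1
      · exact ht
    exact hagree (min ⌊|t|⌋₊ N) ⌊|t|⌋₊ N (min_le_left _ _) (min_le_right _ _) t h2
  have hy0 : y 0 = y₀ := by
    have : y 0 = α 0 0 := hyα 0 0 (by norm_num)
    rw [this, hα0 0]
  -- y solves the g-ODE globally
  have hyode : ∀ t : ℝ, HasDerivAt y (g (y t)) t := by
    intro t
    set N : ℕ := ⌊|t|⌋₊ with hN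
    have ht' : t ∈ Set.Ioo (-((N:ℝ)+1)) ((N:ℝ)+1) := by
      rcases abs_lt.1 (Nat.lt_floor_add_one |t|) with ⟨h1, h2⟩
      exact ⟨h1, h2⟩
    have heq : y =ᶠ[nhds t] α N := by
      refine Filter.eventuallyEq_of_mem (isOpen_Ioo.mem_nhds ht') fun s hs => ?_
      exact hyα N s (abs_lt.2 ⟨by linarith [hs.1], hs.2⟩)
    have hd := (hαode N t ht').congr_of_eventuallyEq heq
    rwa [← hyα N t (abs_lt.2 ⟨by linarith [ht'.1], ht'.2⟩)] at hd
  -- conservation of Q along solutions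
  have hconsv : ∀ (u : ℝ → Fin d → ℝ),
      (∀ s : ℝ, ∃ c : ℝ, ∀ i, HasDerivAt (fun r => u r i) (c * f (u s) i) s) →
      ∀ t, Q (u t) = Q (u 0) := by
    intro u hu t
    have hd : ∀ s : ℝ, HasDerivAt (fun r => Q (u r)) 0 s := by
      intro s
      obtain ⟨c, hc⟩ := hu s
      have h1 : HasDerivAt (fun r => Q (u r))
          (∑ i, (2:ℕ) * u s i ^ (2-1) * (c * f (u s) i)) s := by
        apply HasDerivAt.fun_sum
        intro i _
        exact (hc i).pow 2
      have h2 : (∑ i, ((2:ℕ):ℝ) * u s i ^ (2-1) * (c * f (u s) i)) = 0 := by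
        have : (∑ i, ((2:ℕ):ℝ) * u s i ^ (2-1) * (c * f (u s) i))
            = (2*c) * ∑ i, u s i * f (u s) i := by
          rw [Finset.mul_sum]
          refine Finset.sum_congr rfl fun i _ => ?_
          push_cast
          ring
        rw [this, key (u s), mul_zero]
      rw [h2] at h1
      exact h1
    have hcst := is_const_of_deriv_eq_zero (f := fun r => Q (u r))
      (fun s => (hd s).differentiableAt) (fun s => (hd s).deriv)
    exact hcst t 0
  -- conservation for y and hence χ = 1 along y
  have hyQ : ∀ t, Q (y t) = Q y₀ := by
    have := hconsv y (fun s => ⟨χ (Q (y s)), fun i => by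
      have := (hasDerivAt_pi.1 (hyode s)) i
      exact this⟩)
    intro t
    rw [this t, hy0]
  have hχ1 : ∀ x : Fin d → ℝ, Q x = Q y₀ → ∀ i, g x i = f x i := by
    intro x hx i
    have : χ (Q x) = 1 := by
      rw [hx]
      apply Real.smoothTransition.one_of_one_le
      simp only [hb_def]
      linarith
    simp [hg_def, this]
  -- y solves the original ODE
  have hymain : ∀ (t : ℝ) (i : Fin d),
      HasDerivAt (fun s => y s i) (∑ j, ∑ k, B i j k * y t j * y t k) t := by
    intro t i
    have h1 := (hasDerivAt_pi.1 (hyode t)) i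
    rwa [hχ1 (y t) (hyQ t) i] at h1
  refine ⟨y, ⟨hy0, hymain⟩, ?_⟩
  -- uniqueness
  rintro z ⟨hz0, hzode⟩
  have hzQ : ∀ t, Q (z t) = Q y₀ := by
    have := hconsv z (fun s => ⟨1, fun i => by
      have h := hzode s i
      rw [one_mul]
      exact h⟩)
    intro t
    rw [this t, hz0]
  have hzg : ∀ t : ℝ, HasDerivAt z (g (z t)) t := by
    intro t
    have hv : HasDerivAt z (f (z t)) t := hasDerivAt_pi.2 fun i => hzode t i
    have : g (z t) = f (z t) := funext fun i => hχ1 (z t) (hzQ t) i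
    rwa [this]
  funext t
  set N : ℕ := ⌊|t|⌋₊ with hN
  have ht' : t ∈ Set.Ioo (-((N:ℝ)+1)) ((N:ℝ)+1) := by
    rcases abs_lt.1 (Nat.lt_floor_add_one |t|) with ⟨h1, h2⟩
    exact ⟨h1, h2⟩
  have h0mem : (0:ℝ) ∈ Set.Ioo (-((N:ℝ)+1)) ((N:ℝ)+1) := by
    constructor
    · have : (0:ℝ) ≤ N := Nat.cast_nonneg N
      linarith
    · positivity
  exact huniq z y _ _ h0mem (fun s _ => hzg s) (fun s _ => hyode s)
    (by rw [hz0, hy0]) ht'
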